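/- Define the sequence $t_0 = t > 0$ and $t_k = \frac{1}{2(n-1)}\ln\left(\frac{e^{2(n-1)t_{k-1}}+1}{2}\right)$ for $k \ge 1$, with $n \ge 2$. Then for all $k \ge 1$: (i) $e^{2(n-1)t_k} - 1 = \frac{e^{2(n-1)t_{k-1}}-1}{2}$; (ii) $t_k < \frac{3}{4}t_{k-1}$ provided $t \le \frac{1}{2(n-1)}\ln(3/2)$; (iii) $\sum_{i=0}^\infty t_i < 4t$. -/

import Mathlib

/-- The iteration times `t₀ = t`, `t_k = (2(n-1))⁻¹ log((e^{2(n-1)t_{k-1}}+1)/2)` satisfy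
(i) `e^{2(n-1)t_k} - 1 = (e^{2(n-1)t_{k-1}} - 1)/2`;
(ii) `t_k < (3/4) t_{k-1}` provided `t ≤ (2(n-1))⁻¹ log(3/2)`;
(iii) `∑ᵢ tᵢ < 4t`. -/
theorem stmt_11 (n : ℕ) (hn : 2 ≤ n) (t : ℝ) (ht : 0 < t)
    (htle : t ≤ Real.log (3/2) / (2*((n:ℝ)-1)))
    (ts : ℕ → ℝ) (h0 : ts 0 = t)
    (hrec : ∀ k : ℕ,
      ts (k+1) = Real.log ((Real.exp (2*((n:ℝ)-1)*ts k) + 1)/2) / (2*((n:ℝ)-1))) :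
    (∀ k : ℕ, Real.exp (2*((n:ℝ)-1)*ts (k+1)) - 1
        = (Real.exp (2*((n:ℝ)-1)*ts k) - 1)/2)
    ∧ (∀ k : ℕ, ts (k+1) < (3/4) * ts k)
    ∧ (∑' i : ℕ, ts i) < 4*t := by
  set c : ℝ := 2*((n:ℝ)-1) with hc
  have hn2 : (2:ℝ) ≤ (n:ℝ) := by exact_mod_cast hn
  have hcpos : 0 < c := by rw [hc]; nlinarith
  -- part (i)
  have hi : ∀ k : ℕ, Real.exp (c * ts (k+1)) - 1 = (Real.exp (c * ts k) - 1)/2 := by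
    intro k
    have hy : 0 < (Real.exp (c * ts k) + 1)/2 := by positivity
    rw [hrec k, mul_div_cancel₀ _ hcpos.ne', Real.exp_log hy]
    ring
  -- invariant: positivity and upper bound
  have hinv : ∀ k : ℕ, 0 < ts k ∧ ts k ≤ Real.log (3/2) / c := by
    intro k
    induction k with
    | zero => exact ⟨by rw [h0]; exact ht, by rw [h0]; exact htle⟩
    | succ k ih =>
      obtain ⟨hpos, hle⟩ := ih
      set x := Real.exp (c * ts k) with hx
      have hx1 : 1 < x := by
        rw [hx, show (1:ℝ) = Real.exp 0 by simp]
        exact Real.exp_lt_exp.2 (by positivity)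
      have hx32 : x ≤ 3/2 := by
        have : c * ts k ≤ Real.log (3/2) := by
          calc c * ts k ≤ c * (Real.log (3/2) / c) := by
                exact mul_le_mul_of_nonneg_left hle hcpos.le
            _ = Real.log (3/2) := by field_simp
        calc x ≤ Real.exp (Real.log (3/2)) := Real.exp_le_exp.2 this
          _ = 3/2 := Real.exp_log (by norm_num)
      constructor
      · rw [hrec k, ← hx]
        apply div_pos _ hcpos
        apply Real.log_pos
        linarith
      · rw [hrec k, ← hx]
        apply div_le_div_of_nonneg_right _ hcpos.le
        apply Real.log_le_log (by linarith)
        linarith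
  -- part (ii)
  have hii : ∀ k : ℕ, ts (k+1) < (3/4) * ts k := by
    intro k
    obtain ⟨hpos, hle⟩ := hinv k
    set x := Real.exp (c * ts k) with hx
    have hx1 : 1 < x := by
      rw [hx, show (1:ℝ) = Real.exp 0 by simp]
      exact Real.exp_lt_exp.2 (by positivity)
    have hx32 : x ≤ 3/2 := by
      have : c * ts k ≤ Real.log (3/2) := by
        calc c * ts k ≤ c * (Real.log (3/2) / c) := mul_le_mul_of_nonneg_left hle hcpos.le
          _ = Real.log (3/2) := by field_simp
      calc x ≤ Real.exp (Real.log (3/2)) := Real.exp_le_exp.2 this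
        _ = 3/2 := Real.exp_log (by norm_num)
    -- key : ((x+1)/2)^4 < x^3
    have h1 : 0 < x - 1 := by linarith
    have h2 : 0 < -x^3 + 11*x^2 + 5*x + 1 := by nlinarith [mul_nonneg (sq_nonneg x) (by linarith : (0:ℝ) ≤ 3/2 - x)]
    have hkey : ((x+1)/2)^4 < x^3 := by nlinarith [mul_pos h1 h2]
    have hy1 : (1:ℝ) < (x+1)/2 := by linarith
    have hlog : 4 * Real.log ((x+1)/2) < 3 * Real.log x := by
      have h1 : Real.log (((x+1)/2)^4) < Real.log (x^3) :=
        Real.log_lt_log (by positivity) hkey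
      rwa [Real.log_pow, Real.log_pow] at h1
      -- these give (4:ℕ)• etc; handle below
    have hts : ts k = Real.log x / c := by
      rw [hx, Real.log_exp]; field_simp
    rw [hrec k, ← hx, hts]
    rw [div_lt_iff₀ hcpos]
    have heq : 3/4 * (Real.log x / c) * c = 3/4 * Real.log x := by field_simp
    rw [heq]; linarith
  refine ⟨hi, hii, ?_⟩
  -- part (iii)
  have hbound : ∀ k : ℕ, ts k ≤ t * (3/4)^k := by
    intro k
    induction k with
    | zero => simp [h0]
    | succ k ih =>
      have := hii k
      calc ts (k+1) ≤ (3/4) * ts k := (hii k).le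
        _ ≤ (3/4) * (t * (3/4)^k) := by nlinarith
        _ = t * (3/4)^(k+1) := by ring
  have hgsum : Summable (fun i : ℕ => t * (3/4:ℝ)^i) :=
    (summable_geometric_of_lt_one (by norm_num) (by norm_num)).mul_left t
  have hsum : Summable ts :=
    Summable.of_nonneg_of_le (fun k => (hinv k).1.le) hbound hgsum
  have hlt : (∑' i : ℕ, ts i) < ∑' i : ℕ, t * (3/4:ℝ)^i := by
    apply Summable.tsum_lt_tsum (i := 1) hbound _ hsum hgsum
    calc ts 1 < (3/4) * ts 0 := hii 0
      _ = t * (3/4)^1 := by rw [h0]; ring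
  have hgval : (∑' i : ℕ, t * (3/4:ℝ)^i) = 4 * t := by
    rw [tsum_mul_left, tsum_geometric_of_lt_one (by norm_num) (by norm_num)]
    norm_num [mul_comm]
  linarith [hlt, hgval.le]
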